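/- Let c_1, …, c_T be a simplex coding in ℝ^{T−1}, T ≥ 2, let ρ_1, …, ρ_T be nonnegative reals with ∑_{y=1}^T ρ_y = 1, and let b satisfy ρ_b = max_y ρ_y. Define the SC-SVM conditional risk C(α) = ∑_{y=1}^T ρ_y ∑_{y' ≠ y} max(0, 1/(T−1) + ⟨c_{y'}, α⟩). Then for every α ∈ ℝ^{T−1} and every label D(α) with ⟨c_{D(α)}, α⟩ = max_y ⟨c_y, α⟩, the pointwise comparison inequality holds with constant T−1 and exponent 1: ρ_b − ρ_{D(α)} ≤ (T−1) (C(α) − C(c_b)). -/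

import Mathlib

open scoped RealInnerProductSpace

/-- pointwise comparison inequality for the simplex cone SVM loss, with
constant `T - 1` and exponent `1`: if `b` maximizes `ρ`, `C` is the SC-SVM conditional
risk, and `D α` is any label maximizing `y ↦ ⟪c y, α⟫`, then
`ρ b - ρ (D α) ≤ (T-1) (C α - C (c b))`. -/
theorem simplex_cone_svm_pointwise_comparison (T : ℕ) (hT : 2 ≤ T)
    (c : Fin T → EuclideanSpace ℝ (Fin (T - 1)))
    (hnorm : ∀ y, ‖c y‖ = 1)
    (hinner : ∀ y y', y ≠ y' → ⟪c y, c y'⟫ = -(1 / ((T : ℝ) - 1)))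
    (hsum : ∑ y, c y = 0)
    (ρ : Fin T → ℝ) (hρ : ∀ y, 0 ≤ ρ y) (hρsum : ∑ y, ρ y = 1)
    (b : Fin T) (hb : ∀ y, ρ y ≤ ρ b)
    (C : EuclideanSpace ℝ (Fin (T - 1)) → ℝ)
    (hC : ∀ α, C α = ∑ y, ρ y *
      ∑ y' ∈ Finset.univ.erase y, max 0 (1 / ((T : ℝ) - 1) + ⟪c y', α⟫))
    (α : EuclideanSpace ℝ (Fin (T - 1)))
    (D : Fin T) (hD : ∀ y, ⟪c y, α⟫ ≤ ⟪c D, α⟫) :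
    ρ b - ρ D ≤ ((T : ℝ) - 1) * (C α - C (c b)) := by
  have ht1 : (1:ℝ) ≤ (T:ℝ) - 1 := by
    have : (2:ℝ) ≤ (T:ℝ) := by exact_mod_cast hT
    linarith
  have htpos : (0:ℝ) < (T:ℝ) - 1 := by linarith
  set s : ℝ := 1 / ((T:ℝ) - 1) with hs
  have hspos : 0 < s := by positivity
  have hsT : s * ((T:ℝ) - 1) = 1 := by
    rw [hs]; field_simp
  set m : Fin T → ℝ := fun y => max 0 (s + ⟪c y, α⟫) with hm
  -- rewrite C β in general
  have hCgen : ∀ (β : EuclideanSpace ℝ (Fin (T - 1))),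
      C β = (∑ y, max 0 (s + ⟪c y, β⟫)) - ∑ y, ρ y * max 0 (s + ⟪c y, β⟫) := by
    intro β
    rw [hC]
    have herase : ∀ y : Fin T, ∑ y' ∈ Finset.univ.erase y, max 0 (s + ⟪c y', β⟫)
        = (∑ y', max 0 (s + ⟪c y', β⟫)) - max 0 (s + ⟪c y, β⟫) :=
      fun y => Finset.sum_erase_eq_sub (Finset.mem_univ y)
    simp_rw [herase, mul_sub, Finset.sum_sub_distrib, ← Finset.sum_mul, hρsum, one_mul]
  have hCα : C α = (∑ y, m y) - ∑ y, ρ y * m y := hCgen α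
  -- value at c b
  have hself : ⟪c b, c b⟫ = 1 := by
    rw [real_inner_self_eq_norm_sq, hnorm b]; norm_num
  have hmb : ∀ y : Fin T, max 0 (s + ⟪c y, c b⟫) = if y = b then s + 1 else 0 := by
    intro y
    by_cases hyb : y = b
    · subst hyb
      rw [hself, if_pos rfl]
      exact max_eq_right (by linarith)
    · simp only [hyb, if_false]
      rw [hinner y b hyb]
      simp [← hs]
  have hsum_mb : (∑ y, max 0 (s + ⟪c y, c b⟫)) = s + 1 := by
    simp_rw [hmb]; simp
  have hsum_ρmb : (∑ y, ρ y * max 0 (s + ⟪c y, c b⟫)) = ρ b * (s + 1) := by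
    simp_rw [hmb]
    rw [Finset.sum_eq_single b] <;> simp +contextual
  have hCcb : C (c b) = (1 - ρ b) * (s + 1) := by
    rw [hCgen (c b), hsum_mb, hsum_ρmb]; ring
  -- sum of inner products vanishes
  have hsum_inner : ∑ y, ⟪c y, α⟫ = 0 := by
    rw [← sum_inner, hsum, inner_zero_left]
  -- D has nonnegative score
  have hDnn : 0 ≤ ⟪c D, α⟫ := by
    by_contra h
    push_neg at h
    have h1 : ∑ y, ⟪c y, α⟫ ≤ ∑ _y : Fin T, ⟪c D, α⟫ := Finset.sum_le_sum fun y _ => hD y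
    have h2 : ∑ _y : Fin T, ⟪c D, α⟫ = (T:ℝ) * ⟪c D, α⟫ := by
      rw [Finset.sum_const, Finset.card_univ, Fintype.card_fin, nsmul_eq_mul]
    rw [hsum_inner, h2] at h1
    nlinarith
  have hmD : s ≤ m D := le_trans (by linarith) (le_max_right 0 (s + ⟪c D, α⟫))
  -- lower bound on sum of m
  have hS : (T:ℝ) * s ≤ ∑ y, m y := by
    have h1 : ∑ y, (s + ⟪c y, α⟫) ≤ ∑ y, m y :=
      Finset.sum_le_sum fun y _ => le_max_right _ _
    have h2 : ∑ y : Fin T, (s + ⟪c y, α⟫) = (T:ℝ) * s := by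
      rw [Finset.sum_add_distrib, hsum_inner, Finset.sum_const, Finset.card_univ,
        Fintype.card_fin, nsmul_eq_mul]
      ring
    linarith
  -- key bound on weighted sum
  have hkey : ∑ y, ρ y * m y + (ρ b - ρ D) * m D ≤ ρ b * ∑ y, m y := by
    have h1 : ∑ y ∈ Finset.univ.erase D, ρ y * m y
        ≤ ∑ y ∈ Finset.univ.erase D, ρ b * m y :=
      Finset.sum_le_sum fun y _ => mul_le_mul_of_nonneg_right (hb y) (le_max_left _ _)
    rw [Finset.sum_erase_eq_sub (Finset.mem_univ D),
      Finset.sum_erase_eq_sub (Finset.mem_univ D), ← Finset.mul_sum] at h1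
    linarith
  have hρb1 : ρ b ≤ 1 := by
    rw [← hρsum]
    exact Finset.single_le_sum (fun y _ => hρ y) (Finset.mem_univ b)
  have hρD : ρ D ≤ ρ b := hb D
  -- assemble
  have hCαge : (1 - ρ b) * ((T:ℝ) * s) + (ρ b - ρ D) * s ≤ C α := by
    rw [hCα]
    nlinarith [mul_le_mul_of_nonneg_left hS (by linarith : (0:ℝ) ≤ 1 - ρ b),
      mul_le_mul_of_nonneg_left hmD (by linarith : (0:ℝ) ≤ ρ b - ρ D)]
  have hid1 : ((T:ℝ)-1) * ((1 - ρ b)*((T:ℝ)*s) + (ρ b - ρ D)*s)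
      = (1 - ρ b)*(T:ℝ) + (ρ b - ρ D) := by
    rw [hs]; field_simp
  have hid2 : ((T:ℝ)-1)*((1 - ρ b)*(s+1)) = (1 - ρ b)*(T:ℝ) := by
    rw [hs]; field_simp; ring
  have hmul := mul_le_mul_of_nonneg_left hCαge (le_of_lt htpos)
  rw [hid1] at hmul
  rw [hCcb]
  nlinarith [hmul, hid2]
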